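/- In the breadth-first construction of a tree from a configuration of n particles at distinct positions x₁,…,xₙ on the circle of unit circumference with weights p₁,…,pₙ summing to 1: let F(u) = −u + Σᵢ pᵢ·1{xᵢ ≤ u}, assume F attains its infimum (of left limits) uniquely at the position x_{v₁} of particle v₁, order particles v₁, v₂, …, vₙ cyclically starting from x_{v₁}, and set y(1) = x_{v₁}, y(j+1) = y(j) + p_{v_j} mod 1. Then for every 2 ≤ j ≤ n, the position x_{v_j} lies in the interval [y(1), y(j)) (taken mod 1). -/

import Mathlib

open Set Finset

/-- Breadth-first construction: working in coordinates shifted so that the position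
`x (v 0)` of the unique minimizer of the left-limit of
`F(u) = -u + ∑ᵢ pᵢ 1{xᵢ ≤ u}` is the origin of the circle (so the position of
particle `v j` is `Int.fract (x (v j) - x (v 0))` and `y j - y 0 = ∑_{k<j} p (v k)`),
the position of the `j`-th particle lies in `[y 0, y j)`, i.e.
`Int.fract (x (v j) - x (v 0)) ∈ [0, ∑_{k<j} p (v k))` for all `j ≥ 1`. -/
theorem stmt6 (n : ℕ) (hn : 0 < n) (x p : Fin n → ℝ)
    (hx : ∀ i, x i ∈ Ico (0:ℝ) 1) (hxinj : Function.Injective x)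
    (hp : ∀ i, 0 < p i) (hsum : ∑ i, p i = 1)
    (v : Fin n → Fin n) (hv : Function.Bijective v)
    (hord : StrictMono fun j : Fin n => Int.fract (x (v j) - x (v ⟨0, hn⟩)))
    (hmin : ∀ w : Fin n, w ≠ v ⟨0, hn⟩ →
      (-(x (v ⟨0, hn⟩)) + ∑ i, if x i < x (v ⟨0, hn⟩) then p i else 0)
        < -(x w) + ∑ i, if x i < x w then p i else 0) :
    ∀ j : Fin n, 0 < (j : ℕ) →
      Int.fract (x (v j) - x (v ⟨0, hn⟩)) ∈
        Ico (0:ℝ) (∑ k ∈ Finset.Iio j, p (v k)) := by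
  intro j hj
  have hx0 := hx (v ⟨0, hn⟩)
  -- fract formula
  have hB : ∀ i, Int.fract (x i - x (v ⟨0, hn⟩))
      = x i - x (v ⟨0, hn⟩) + (if x i < x (v ⟨0, hn⟩) then (1:ℝ) else 0) := by
    intro i
    have hxi := hx i
    by_cases h : x i < x (v ⟨0, hn⟩)
    · rw [if_pos h]
      have hfl : ⌊x i - x (v ⟨0, hn⟩)⌋ = (-1 : ℤ) := by
        rw [Int.floor_eq_iff]
        constructor <;> push_cast <;> [linarith [hxi.1, hx0.2]; linarith]
      rw [Int.fract, hfl]; push_cast; ring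
    · rw [if_neg h, add_zero]
      push_neg at h
      refine (Int.fract_eq_self (a := x i - x (v ⟨0, hn⟩))).2 ⟨?_, ?_⟩ <;> linarith [hxi.2, hx0.1]
  set c : ℝ := if x (v j) < x (v ⟨0, hn⟩) then (1:ℝ) else 0 with hc
  have hper : ∀ i, (if Int.fract (x i - x (v ⟨0, hn⟩)) < Int.fract (x (v j) - x (v ⟨0, hn⟩)) then p i else 0)
      = (if x i < x (v j) then p i else 0) - (if x i < x (v ⟨0, hn⟩) then p i else 0) + c * p i := by
    intro i
    have hxi := hx i
    have hxj := hx (v j)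
    rw [hB i, hB (v j), hc]
    split_ifs <;> linarith [hxi.1, hxi.2, hxj.1, hxj.2, hx0.1, hx0.2, hp i]
  have hsum1 : ∑ i, (if Int.fract (x i - x (v ⟨0, hn⟩)) < Int.fract (x (v j) - x (v ⟨0, hn⟩)) then p i else 0)
      = (∑ i, if x i < x (v j) then p i else 0)
        - (∑ i, if x i < x (v ⟨0, hn⟩) then p i else 0) + c := by
    rw [Finset.sum_congr rfl (fun i _ => hper i)]
    rw [Finset.sum_add_distrib, Finset.sum_sub_distrib, ← Finset.mul_sum, hsum, mul_one]
  have hreindex : ∑ i, (if Int.fract (x i - x (v ⟨0, hn⟩)) < Int.fract (x (v j) - x (v ⟨0, hn⟩)) then p i else 0)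
      = ∑ k, (if Int.fract (x (v k) - x (v ⟨0, hn⟩)) < Int.fract (x (v j) - x (v ⟨0, hn⟩)) then p (v k) else 0) :=
    (Fintype.sum_bijective v hv _ _ (fun k => rfl)).symm
  have hIio : ∑ k ∈ Finset.Iio j, p (v k)
      = ∑ k, (if Int.fract (x (v k) - x (v ⟨0, hn⟩)) < Int.fract (x (v j) - x (v ⟨0, hn⟩)) then p (v k) else 0) := by
    have h1 : ∀ k : Fin n,
        (if Int.fract (x (v k) - x (v ⟨0, hn⟩)) < Int.fract (x (v j) - x (v ⟨0, hn⟩)) then p (v k) else 0)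
        = (if k < j then p (v k) else 0) := fun k => if_congr hord.lt_iff_lt rfl rfl
    rw [Finset.sum_congr rfl (fun k _ => h1 k)]
    have h2 : Finset.Iio j = Finset.univ.filter (· < j) := by ext k; simp
    rw [h2, Finset.sum_filter]
  have hne : v j ≠ v ⟨0, hn⟩ := by
    intro h
    have := hv.injective h
    rw [Fin.ext_iff] at this
    simp [this] at hj
  have hmin' := hmin (v j) hne
  have hBj := hB (v j)
  constructor
  · exact Int.fract_nonneg _
  · rw [hIio, ← hreindex, hsum1, hBj, hc]
    split_ifs <;> linarith
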